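/- Let f : D → {0,1} be a partial Boolean function with D ⊆ {0,1}^M and let d ≥ 0 be an integer. The threshold degree of f exceeds d if and only if there exists a function ψ : {0,1}^M → ℝ such that: (1) ψ(x) = 0 for every x ∉ D; (2) ψ has pure high degree d; (3) ψ(x) ≥ 0 whenever f(x) = 1 and ψ(x) ≤ 0 whenever f(x) = 0; and (4) ‖ψ‖₁ > 0. -/

import Mathlib

open MvPolynomial
open scoped Classical

noncomputable section

/-- The real value of a Boolean: `1` for `true`, `0` for `false`. -/
def bval (b : Bool) : ℝ := if b then 1 else 0

/-- Evaluation of a real multilinear polynomial at a Boolean point of `{0,1}^σ`. -/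
def pEval {σ : Type*} (p : MvPolynomial σ ℝ) (x : σ → Bool) : ℝ :=
  MvPolynomial.eval (fun i => bval (x i)) p

/-- `p` sign-represents the partial Boolean function `f` with domain `D`. -/
def SignRep {σ : Type*} (D : Set (σ → Bool)) (f : (σ → Bool) → Bool)
    (p : MvPolynomial σ ℝ) : Prop :=
  ∀ x ∈ D, (f x = true → 0 < pEval p x) ∧ (f x = false → pEval p x < 0)

/-- The threshold degree of the partial Boolean function `f` with domain `D`. -/
noncomputable def thrDeg {σ : Type*} (D : Set (σ → Bool)) (f : (σ → Bool) → Bool) : ℕ :=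
  sInf {d | ∃ p : MvPolynomial σ ℝ, SignRep D f p ∧ p.totalDegree = d}

/-- `ψ` has pure high degree `d`: it is orthogonal to every polynomial of degree at most `d`. -/
def PureHighDeg {σ : Type*} [Fintype σ] [DecidableEq σ] (d : ℕ)
    (ψ : (σ → Bool) → ℝ) : Prop :=
  ∀ p : MvPolynomial σ ℝ, p.totalDegree ≤ d → ∑ x : σ → Bool, ψ x * pEval p x = 0

/-! ### Auxiliary material -/

/-- The multilinear indicator polynomial of the Boolean point `y`. -/
def chiPoly (M : ℕ) (y : Fin M → Bool) : MvPolynomial (Fin M) ℝ :=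
  ∏ i, (if y i then (X i : MvPolynomial (Fin M) ℝ) else 1 - X i)

lemma pEval_chi {M : ℕ} (y x : Fin M → Bool) :
    pEval (chiPoly M y) x = if x = y then 1 else 0 := by
  unfold chiPoly pEval
  rw [map_prod]
  have hfac : ∀ i, (eval fun i => bval (x i))
      (if y i then (X i : MvPolynomial (Fin M) ℝ) else 1 - X i)
      = if x i = y i then 1 else 0 := by
    intro i
    cases hy : y i <;> cases hx : x i <;> simp [hx, hy, bval]
  simp only [hfac]
  rw [Finset.prod_boole]
  by_cases hxy : x = y
  · simp [hxy]
  · have h2 : ¬ ∀ i ∈ Finset.univ, x i = y i := by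
      intro hall
      exact hxy (funext fun i => hall i (Finset.mem_univ i))
    rw [if_neg h2, if_neg hxy]

/-- Some polynomial sign-represents any partial Boolean function. -/
lemma exists_signRep (M : ℕ) (D : Set (Fin M → Bool)) (f : (Fin M → Bool) → Bool) :
    ∃ p : MvPolynomial (Fin M) ℝ, SignRep D f p := by
  refine ⟨∑ y : Fin M → Bool, C (if f y then (1:ℝ) else -1) * chiPoly M y, ?_⟩
  intro x _
  have hval : pEval (∑ y : Fin M → Bool, C (if f y then (1:ℝ) else -1) * chiPoly M y) x
      = if f x then 1 else -1 := by
    unfold pEval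
    rw [map_sum]
    have : ∀ y : Fin M → Bool,
        (eval fun i => bval (x i)) (C (if f y then (1:ℝ) else -1) * chiPoly M y)
        = (if f y then (1:ℝ) else -1) * (if x = y then 1 else 0) := by
      intro y
      rw [map_mul, eval_C]
      congr 1
      exact pEval_chi y x
    simp only [this, mul_ite, mul_one, mul_zero]
    rw [Finset.sum_ite_eq (Finset.univ) x (fun y => if f y then (1:ℝ) else -1)]
    simp
  constructor
  · intro hfx; rw [hval, hfx]; norm_num
  · intro hfx; rw [hval, hfx]; norm_num

/-- Dual characterization of threshold degree: the threshold degree of `f`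
exceeds `d` iff there is a nonzero function `ψ` supported on the domain of `f`, of pure
high degree `d`, that agrees in sign with `f`. -/
theorem stmt5 (M : ℕ) (D : Set (Fin M → Bool)) (f : (Fin M → Bool) → Bool) (d : ℕ) :
    d < thrDeg D f ↔
      ∃ ψ : (Fin M → Bool) → ℝ,
        (∀ x, x ∉ D → ψ x = 0) ∧
        PureHighDeg d ψ ∧
        (∀ x ∈ D, (f x = true → 0 ≤ ψ x) ∧ (f x = false → ψ x ≤ 0)) ∧
        0 < ∑ x : Fin M → Bool, |ψ x| := by
  classical
  have hSne : {e | ∃ p : MvPolynomial (Fin M) ℝ, SignRep D f p ∧ p.totalDegree = e}.Nonempty := by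
    obtain ⟨p, hp⟩ := exists_signRep M D f
    exact ⟨p.totalDegree, p, hp, rfl⟩
  have key : d < thrDeg D f ↔
      ¬ ∃ p : MvPolynomial (Fin M) ℝ, SignRep D f p ∧ p.totalDegree ≤ d := by
    constructor
    · rintro h ⟨p, hp, hpd⟩
      have : thrDeg D f ≤ p.totalDegree := Nat.sInf_le ⟨p, hp, rfl⟩
      omega
    · intro h
      by_contra hle
      push_neg at hle
      obtain ⟨p, hp, hpe⟩ := Nat.sInf_mem hSne
      exact h ⟨p, hp, by rw [hpe]; exact hle⟩
  rw [key]; clear key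
  constructor
  · -- hard direction: no low-degree sign representation gives a dual witness
    intro h
    set ε : (Fin M → Bool) → ℝ := fun x => if f x then 1 else -1 with hεdef
    have habsε : ∀ x, |ε x| = 1 := by
      intro x; by_cases hfx : f x <;> simp [hεdef, hfx]
    let L : MvPolynomial (Fin M) ℝ →ₗ[ℝ] EuclideanSpace ℝ (Fin M → Bool) :=
      { toFun := fun p =>
          WithLp.toLp 2 (fun x => if x ∈ D then ε x * pEval p x else 0 : (Fin M → Bool) → ℝ)
        map_add' := by
          intro p q
          ext x
          simp only [PiLp.add_apply]
          by_cases hx : x ∈ D <;> simp [pEval, hx, mul_add]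
        map_smul' := by
          intro c p
          ext x
          simp only [PiLp.smul_apply, smul_eq_mul, RingHom.id_apply]
          by_cases hx : x ∈ D <;> simp [pEval, hx] <;> ring }
    have hLapply : ∀ (p : MvPolynomial (Fin M) ℝ) (x : Fin M → Bool),
        L p x = if x ∈ D then ε x * pEval p x else 0 := fun p x => rfl
    set C : Submodule ℝ (EuclideanSpace ℝ (Fin M → Bool)) := (restrictTotalDegree (Fin M) ℝ d).map L with hC
    set Δ : Set (EuclideanSpace ℝ (Fin M → Bool)) := {y | (∀ x, 0 ≤ y x) ∧ (∀ x, x ∉ D → y x = 0) ∧ ∑ x, y x = 1} with hΔ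
    by_cases hins : ∃ y ∈ Δ, y ∈ (Cᗮ : Set (EuclideanSpace ℝ (Fin M → Bool)))
    · -- a dual witness exists
      obtain ⟨y, ⟨hy0, hyD, hy1⟩, hyC⟩ := hins
      refine ⟨fun x => if x ∈ D then ε x * y x else 0, ?_, ?_, ?_, ?_⟩
      · intro x hx; simp [hx]
      · intro p hp
        have hLp : L p ∈ C :=
          Submodule.mem_map_of_mem ((mem_restrictTotalDegree (σ := Fin M) (R := ℝ) (m := d) p).2 hp)
        have hinner : (inner ℝ (L p) y : ℝ) = 0 :=
          (Submodule.mem_orthogonal C y).1 hyC (L p) hLp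
        rw [PiLp.inner_apply] at hinner
        simp only [RCLike.inner_apply, conj_trivial] at hinner
        have hswap : ∑ x : Fin M → Bool, (if x ∈ D then ε x * y x else 0) * pEval p x
            = ∑ x : Fin M → Bool, L p x * y x := by
          apply Finset.sum_congr rfl
          intro x _
          rw [hLapply]
          split_ifs with hx
          · ring
          · rw [zero_mul, zero_mul]
        exact hswap.trans ((Finset.sum_congr rfl fun x _ => mul_comm _ _).trans hinner)
      · intro x hx
        constructor
        · intro hfx
          simp only [hx, if_pos, hεdef, hfx, if_true, one_mul]
          exact hy0 x
        · intro hfx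
          simp only [hx, if_pos, hεdef, hfx]
          simp only [Bool.false_eq_true, if_false, neg_one_mul, neg_nonpos]
          exact hy0 x
      · have habs : ∀ x, |if x ∈ D then ε x * y x else 0| = y x := by
          intro x
          by_cases hx : x ∈ D
          · rw [if_pos hx, abs_mul, habsε, one_mul, abs_of_nonneg (hy0 x)]
          · rw [if_neg hx, hyD x hx, abs_zero]
        simp only [habs]
        rw [hy1]; norm_num
    · -- no dual witness: separate and contradict `h`
      exfalso
      have hΔconv : Convex ℝ Δ := by
        rintro a ha b hb s t hs ht hst
        refine ⟨?_, ?_, ?_⟩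
        · intro x
          simp only [PiLp.add_apply, PiLp.smul_apply, smul_eq_mul]
          exact add_nonneg (mul_nonneg hs (ha.1 x)) (mul_nonneg ht (hb.1 x))
        · intro x hx
          simp only [PiLp.add_apply, PiLp.smul_apply, smul_eq_mul,
            ha.2.1 x hx, hb.2.1 x hx, mul_zero, add_zero]
        · simp only [PiLp.add_apply, PiLp.smul_apply, smul_eq_mul]
          rw [Finset.sum_add_distrib, ← Finset.mul_sum, ← Finset.mul_sum,
            ha.2.2, hb.2.2, mul_one, mul_one, hst]
      have hΔclosed : IsClosed Δ := by
        have h1 : Δ = (⋂ x, {y : EuclideanSpace ℝ (Fin M → Bool) | 0 ≤ y x}) ∩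
            ((⋂ x ∈ Dᶜ, {y : EuclideanSpace ℝ (Fin M → Bool) | y x = 0}) ∩
              {y : EuclideanSpace ℝ (Fin M → Bool) | ∑ x, y x = 1}) := by
          ext y
          simp only [hΔ, Set.mem_setOf_eq, Set.mem_inter_iff, Set.mem_iInter,
            Set.mem_compl_iff] <;> tauto
        rw [h1]
        refine IsClosed.inter (isClosed_iInter fun x => ?_)
          (IsClosed.inter (isClosed_biInter fun x _ => ?_) ?_)
        · exact isClosed_Ici.preimage (EuclideanSpace.proj x).continuous
        · exact (isClosed_singleton (x := (0:ℝ))).preimage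
            (EuclideanSpace.proj x).continuous
        · exact (isClosed_singleton (x := (1:ℝ))).preimage
            (continuous_finset_sum _ fun x _ => (EuclideanSpace.proj x).continuous)
      have hΔbdd : Bornology.IsBounded Δ := by
        apply Metric.isBounded_closedBall (x := (0 : EuclideanSpace ℝ (Fin M → Bool))) (r := 1) |>.subset
        intro y hy
        rw [Metric.mem_closedBall, dist_zero_right]
        have hle : ∀ x, y x ≤ 1 := by
          intro x
          rw [← hy.2.2]
          exact Finset.single_le_sum (fun z _ => hy.1 z) (Finset.mem_univ x)
        have hnorm : ‖y‖ ^ 2 ≤ 1 := by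
          rw [EuclideanSpace.norm_eq]
          rw [Real.sq_sqrt (by positivity)]
          calc ∑ x, ‖y x‖ ^ 2 ≤ ∑ x, y x := by
                apply Finset.sum_le_sum
                intro x _
                rw [Real.norm_eq_abs, sq_abs]
                nlinarith [hy.1 x, hle x]
            _ = 1 := hy.2.2
        nlinarith [norm_nonneg y]
      have hΔcomp : IsCompact Δ := Metric.isCompact_of_isClosed_isBounded hΔclosed hΔbdd
      have hdisj : Disjoint Δ (Cᗮ : Set (EuclideanSpace ℝ (Fin M → Bool))) :=
        Set.disjoint_left.2 fun {y} hy1 hy2 => hins ⟨y, hy1, hy2⟩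
      obtain ⟨g, u, v, hgu, huv, hgv⟩ :=
        geometric_hahn_banach_compact_closed hΔconv hΔcomp (Cᗮ).convex
          (Cᗮ).closed_of_finiteDimensional hdisj
      have hv0 : v < 0 := by
        have := hgv 0 (Submodule.zero_mem _)
        simpa using this
      have hg0 : ∀ z ∈ Cᗮ, g z = 0 := by
        intro z hz
        by_contra hne
        have h1 : v < ((v - 1) / g z) * g z := by
          have := hgv (((v - 1) / g z) • z) (Submodule.smul_mem _ _ hz)
          simpa [map_smul, smul_eq_mul] using this
        rw [div_mul_cancel₀ _ hne] at h1
        linarith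
      set w : EuclideanSpace ℝ (Fin M → Bool) :=
        (InnerProductSpace.toDual ℝ (EuclideanSpace ℝ (Fin M → Bool))).symm g with hw
      have hwinner : ∀ z : EuclideanSpace ℝ (Fin M → Bool), (inner ℝ w z : ℝ) = g z := fun z =>
        InnerProductSpace.toDual_symm_apply
      have hwC : w ∈ C := by
        rw [← Submodule.orthogonal_orthogonal C]
        rw [Submodule.mem_orthogonal]
        intro z hz
        rw [real_inner_comm, hwinner, hg0 z hz]
      obtain ⟨p, hpdeg, hLpw⟩ := hwC
      have hwx : ∀ x ∈ D, w x < 0 := by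
        intro x hx
        have hmem : (EuclideanSpace.single x (1:ℝ)) ∈ Δ := by
          refine ⟨?_, ?_, ?_⟩
          · intro z
            rw [EuclideanSpace.single_apply]
            split <;> norm_num
          · intro z hz
            rw [EuclideanSpace.single_apply, if_neg]
            rintro rfl; exact hz hx
          · simp [EuclideanSpace.single_apply]
        have hgval : g (EuclideanSpace.single x (1:ℝ)) = w x := by
          rw [← hwinner, PiLp.inner_apply]
          simp only [RCLike.inner_apply, conj_trivial, EuclideanSpace.single_apply,
            mul_ite, mul_one, mul_zero, ite_mul, one_mul, zero_mul]
          rw [Finset.sum_ite_eq' Finset.univ x (fun z => w z)]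
          simp
        have := hgu _ hmem
        rw [hgval] at this
        linarith
      apply h
      refine ⟨-p, ?_, ?_⟩
      · intro x hx
        have h1 : ε x * pEval p x < 0 := by
          have := hwx x hx
          rw [← hLpw, hLapply, if_pos hx] at this
          exact this
        have hneg : pEval (-p) x = - pEval p x := map_neg (eval fun i => bval (x i)) p
        constructor
        · intro hfx
          rw [hεdef] at h1
          simp only [hfx, if_true, one_mul] at h1
          rw [hneg]
          linarith
        · intro hfx
          rw [hεdef] at h1
          simp only [hfx, Bool.false_eq_true, if_false, neg_one_mul, neg_neg] at h1
          rw [hneg]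
          linarith
      · rw [totalDegree_neg]
        exact (mem_restrictTotalDegree (σ := Fin M) (R := ℝ) (m := d) p).1 hpdeg
  · -- easy direction
    rintro ⟨ψ, h0, hphd, hsgn, hpos⟩ ⟨p, hp, hpd⟩
    have hsum := hphd p hpd
    have hnn : ∀ x ∈ Finset.univ, (0:ℝ) ≤ ψ x * pEval p x := by
      intro x _
      by_cases hx : x ∈ D
      · cases hfx : f x
        · have := mul_nonneg (neg_nonneg.2 ((hsgn x hx).2 hfx))
            (neg_nonneg.2 ((hp x hx).2 hfx).le)
          nlinarith
        · exact mul_nonneg ((hsgn x hx).1 hfx) ((hp x hx).1 hfx).le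
      · simp [h0 x hx]
    obtain ⟨x0, hx0⟩ : ∃ x0, ψ x0 ≠ 0 := by
      by_contra hall
      push_neg at hall
      simp [hall] at hpos
    have hx0D : x0 ∈ D := by
      by_contra hD
      exact hx0 (h0 x0 hD)
    have hlt : 0 < ψ x0 * pEval p x0 := by
      cases hfx : f x0
      · exact mul_pos_of_neg_of_neg (((hsgn x0 hx0D).2 hfx).lt_of_ne hx0)
          ((hp x0 hx0D).2 hfx)
      · exact mul_pos (((hsgn x0 hx0D).1 hfx).lt_of_ne (Ne.symm hx0))
          ((hp x0 hx0D).1 hfx)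
    have : (0:ℝ) < ∑ x : Fin M → Bool, ψ x * pEval p x :=
      Finset.sum_pos' hnn ⟨x0, Finset.mem_univ _, hlt⟩
    rw [hsum] at this
    exact lt_irrefl 0 this
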